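/- Let M be the (W+1)×(W+1) lower-triangular stochastic matrix with M_{00}=1 and, for row d ≥ 1, M_{d,d-j} = q_j for 1 ≤ j ≤ d and M_{dd} = 1 - q_1 - ··· - q_d, where q_j ≥ 0 and Σ_j q_j ≤ 1. Then the function G(μ) = zᵀ e^{-μ} e^{μM} w, with z the indicator of state W and w = (0,1,...,W)ᵀ, has derivative G'(μ) = -zᵀ e^{-μ}(I-M)e^{μM} w ≤ 0 and second derivative G''(μ) = zᵀ e^{-μ}(I-M)² e^{μM} w ≥ 0; hence G is nonincreasing and convex in μ ≥ 0. -/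

import Mathlib

open Finset Matrix NormedSpace


section MatAux
variable {m : ℕ}

private lemma exp_scalar (c : ℝ) :
    exp ((c : ℝ) • (1 : Matrix (Fin (m+1)) (Fin (m+1)) ℝ)) = Real.exp c • 1 := by
  letI : SeminormedRing (Matrix (Fin (m+1)) (Fin (m+1)) ℝ) := Matrix.linftyOpSemiNormedRing
  letI : NormedRing (Matrix (Fin (m+1)) (Fin (m+1)) ℝ) := Matrix.linftyOpNormedRing
  letI : NormedAlgebra ℝ (Matrix (Fin (m+1)) (Fin (m+1)) ℝ) := Matrix.linftyOpNormedAlgebra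
  have h : (c : ℝ) • (1 : Matrix (Fin (m+1)) (Fin (m+1)) ℝ) = algebraMap ℝ _ c := by
    simp [Algebra.algebraMap_eq_smul_one]
  rw [Matrix.smul_one_eq_diagonal, Matrix.exp_diagonal, Matrix.smul_one_eq_diagonal]
  congr 1; funext i; simp [Pi.exp_def, Real.exp_eq_exp_ℝ]

private lemma exp_shift (A : Matrix (Fin (m+1)) (Fin (m+1)) ℝ) (μ : ℝ) :
    exp (μ • (A - 1)) = Real.exp (-μ) • exp (μ • A) := by
  letI : SeminormedRing (Matrix (Fin (m+1)) (Fin (m+1)) ℝ) := Matrix.linftyOpSemiNormedRing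
  letI : NormedRing (Matrix (Fin (m+1)) (Fin (m+1)) ℝ) := Matrix.linftyOpNormedRing
  letI : NormedAlgebra ℝ (Matrix (Fin (m+1)) (Fin (m+1)) ℝ) := Matrix.linftyOpNormedAlgebra
  have h1 : μ • (A - 1) = μ • A + (-μ) • (1 : Matrix (Fin (m+1)) (Fin (m+1)) ℝ) := by
    rw [smul_sub, neg_smul, sub_eq_add_neg]
  have hc : Commute (μ • A) ((-μ) • (1 : Matrix (Fin (m+1)) (Fin (m+1)) ℝ)) :=
    ((Commute.one_right (μ • A)).smul_right (-μ))
  rw [h1, Matrix.exp_add_of_commute _ _ hc, exp_scalar, mul_smul_comm, mul_one]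

private lemma pow_entry_nonneg (A : Matrix (Fin (m+1)) (Fin (m+1)) ℝ)
    (hA : ∀ i j, 0 ≤ A i j) (n : ℕ) : ∀ i j, 0 ≤ (A ^ n) i j := by
  induction n with
  | zero => intro i j; simp [Matrix.one_apply]; positivity
  | succ n ih =>
    intro i j
    rw [pow_succ, Matrix.mul_apply]
    exact Finset.sum_nonneg fun k _ => mul_nonneg (ih i k) (hA k j)

private lemma exp_entry_nonneg (A : Matrix (Fin (m+1)) (Fin (m+1)) ℝ)
    (hA : ∀ i j, 0 ≤ A i j) (i j : Fin (m+1)) : 0 ≤ exp A i j := by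
  letI : SeminormedRing (Matrix (Fin (m+1)) (Fin (m+1)) ℝ) := Matrix.linftyOpSemiNormedRing
  letI : NormedRing (Matrix (Fin (m+1)) (Fin (m+1)) ℝ) := Matrix.linftyOpNormedRing
  letI : NormedAlgebra ℝ (Matrix (Fin (m+1)) (Fin (m+1)) ℝ) := Matrix.linftyOpNormedAlgebra
  have hsum : Summable fun n : ℕ => ((n.factorial : ℝ)⁻¹) • A ^ n := expSeries_summable' (𝕂 := ℝ) A
  let L : Matrix (Fin (m+1)) (Fin (m+1)) ℝ →ₗ[ℝ] ℝ := Matrix.entryLinearMap ℝ ℝ i j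
  let L' := L.toContinuousLinearMap
  have h1 : exp A = ∑' n : ℕ, ((n.factorial : ℝ)⁻¹) • A ^ n := by
    rw [exp_eq_tsum ℝ]
  have h2 : exp A i j = ∑' n : ℕ, ((n.factorial : ℝ)⁻¹) • (A ^ n) i j := by
    have := L'.map_tsum hsum
    rw [h1]
    exact this
  rw [h2]
  exact tsum_nonneg fun n => smul_nonneg (by positivity) (pow_entry_nonneg A hA n i j)

private lemma hasDerivAt_dot (N C : Matrix (Fin (m+1)) (Fin (m+1)) ℝ)
    (z w : Fin (m+1) → ℝ) (μ : ℝ) :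
    HasDerivAt (fun t : ℝ => z ⬝ᵥ ((C * exp (t • N)) *ᵥ w))
      (z ⬝ᵥ ((C * (N * exp (μ • N))) *ᵥ w)) μ := by
  letI : SeminormedRing (Matrix (Fin (m+1)) (Fin (m+1)) ℝ) := Matrix.linftyOpSemiNormedRing
  letI : NormedRing (Matrix (Fin (m+1)) (Fin (m+1)) ℝ) := Matrix.linftyOpNormedRing
  letI : NormedAlgebra ℝ (Matrix (Fin (m+1)) (Fin (m+1)) ℝ) := Matrix.linftyOpNormedAlgebra
  have hd : HasDerivAt (fun t : ℝ => exp (t • N)) (N * exp (μ • N)) μ :=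
    hasDerivAt_exp_smul_const' N μ
  let L : Matrix (Fin (m+1)) (Fin (m+1)) ℝ →ₗ[ℝ] ℝ :=
    { toFun := fun A => z ⬝ᵥ ((C * A) *ᵥ w)
      map_add' := fun A B => by
        simp only [mul_add, Matrix.add_mulVec, dotProduct_add]
      map_smul' := fun c A => by
        simp only [mul_smul_comm, Matrix.smul_mulVec, dotProduct_smul, smul_eq_mul,
          RingHom.id_apply] }
  let L' := L.toContinuousLinearMap
  exact L'.hasFDerivAt.comp_hasDerivAt μ hd

end MatAux


section RowAux

variable {W : ℕ} {q : ℕ → ℝ} {M : Matrix (Fin (W + 1)) (Fin (W + 1)) ℝ}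

private lemma row_sum_eq'
    (hM : ∀ d e : Fin (W + 1), M d e =
      if (e : ℕ) = (d : ℕ) then 1 - ∑ j ∈ Finset.Icc 1 (d : ℕ), q j
      else if (e : ℕ) < (d : ℕ) then q ((d : ℕ) - (e : ℕ)) else 0)
    (d : Fin (W + 1)) (f : ℕ → ℝ) :
    ∑ e : Fin (W + 1), M d e * f (e : ℕ)
      = (1 - ∑ j ∈ Finset.Icc 1 (d : ℕ), q j) * f (d : ℕ)
        + ∑ j ∈ Finset.Icc 1 (d : ℕ), q j * f ((d : ℕ) - j) := by
  have h1 : ∑ e : Fin (W + 1), M d e * f (e : ℕ)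
      = (∑ e ∈ Finset.univ.erase d, M d e * f (e : ℕ)) + M d d * f (d : ℕ) :=
    (Finset.sum_erase_add _ _ (Finset.mem_univ d)).symm
  have hdd : M d d = 1 - ∑ j ∈ Finset.Icc 1 (d : ℕ), q j := by rw [hM]; simp
  have h2 : ∑ e ∈ Finset.univ.erase d, M d e * f (e : ℕ)
      = ∑ e ∈ Finset.univ.filter (fun e : Fin (W + 1) => (e : ℕ) < (d : ℕ)),
          M d e * f (e : ℕ) := by
    refine (Finset.sum_subset ?_ ?_).symm
    · intro e he
      simp only [Finset.mem_filter, Finset.mem_univ, true_and] at he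
      exact Finset.mem_erase.2 ⟨fun h => absurd (congrArg Fin.val h) (Nat.ne_of_lt he), Finset.mem_univ e⟩
    · intro e he hne
      simp only [Finset.mem_filter, Finset.mem_univ, true_and] at hne
      have hne' : (e : ℕ) ≠ (d : ℕ) := by
        intro h; exact (Finset.mem_erase.1 he).1 (Fin.ext h)
      rw [hM]; simp [hne', hne]
  have h3 : ∑ e ∈ Finset.univ.filter (fun e : Fin (W + 1) => (e : ℕ) < (d : ℕ)),
        M d e * f (e : ℕ)
      = ∑ j ∈ Finset.Icc 1 (d : ℕ), q j * f ((d : ℕ) - j) := by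
    refine Finset.sum_nbij' (i := fun e : Fin (W + 1) => (d : ℕ) - (e : ℕ))
      (j := fun j : ℕ => (⟨(d : ℕ) - j, lt_of_le_of_lt (Nat.sub_le _ _) d.isLt⟩ : Fin (W + 1)))
      ?_ ?_ ?_ ?_ ?_
    · intro e he
      simp only [Finset.mem_filter, Finset.mem_univ, true_and] at he
      exact Finset.mem_Icc.2 ⟨Nat.le_sub_of_add_le (by omega), Nat.sub_le _ _⟩
    · intro j hj
      simp only [Finset.mem_Icc] at hj
      simp only [Finset.mem_filter, Finset.mem_univ, true_and]
      exact Nat.sub_lt (by omega) (by omega)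
    · intro e he
      simp only [Finset.mem_filter, Finset.mem_univ, true_and] at he
      exact Fin.ext (by simp; omega)
    · intro j hj
      simp only [Finset.mem_Icc] at hj
      simp; omega
    · intro e he
      simp only [Finset.mem_filter, Finset.mem_univ, true_and] at he
      have : (d : ℕ) - ((d : ℕ) - (e : ℕ)) = (e : ℕ) := by omega
      rw [hM]
      simp [Nat.ne_of_lt he, he, this]
  rw [h1, h2, h3, hdd, add_comm]

end RowAux


section RowAux2

variable {W : ℕ} {q : ℕ → ℝ} {M : Matrix (Fin (W + 1)) (Fin (W + 1)) ℝ}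

private lemma M_entry_nonneg
    (hq_nonneg : ∀ j, 1 ≤ j → j ≤ W → 0 ≤ q j)
    (hq_sum : ∑ j ∈ Finset.Icc 1 W, q j ≤ 1)
    (hM : ∀ d e : Fin (W + 1), M d e =
      if (e : ℕ) = (d : ℕ) then 1 - ∑ j ∈ Finset.Icc 1 (d : ℕ), q j
      else if (e : ℕ) < (d : ℕ) then q ((d : ℕ) - (e : ℕ)) else 0)
    (d e : Fin (W + 1)) : 0 ≤ M d e := by
  rw [hM]
  have hd : (d : ℕ) ≤ W := by omega
  split_ifs with h1 h2
  · have : ∑ j ∈ Finset.Icc 1 (d : ℕ), q j ≤ ∑ j ∈ Finset.Icc 1 W, q j := by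
      refine Finset.sum_le_sum_of_subset_of_nonneg (Finset.Icc_subset_Icc_right hd) ?_
      intro j hj _
      simp only [Finset.mem_Icc] at hj
      exact hq_nonneg j hj.1 hj.2
    linarith
  · exact hq_nonneg _ (by omega) (by omega)
  · exact le_refl 0

private lemma M_row_sum_one
    (hM : ∀ d e : Fin (W + 1), M d e =
      if (e : ℕ) = (d : ℕ) then 1 - ∑ j ∈ Finset.Icc 1 (d : ℕ), q j
      else if (e : ℕ) < (d : ℕ) then q ((d : ℕ) - (e : ℕ)) else 0)
    (d : Fin (W + 1)) : ∑ e : Fin (W + 1), M d e = 1 := by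
  have := row_sum_eq' hM d (fun _ => (1 : ℝ))
  simp only [mul_one] at this
  rw [this]; ring

/-- `((1-M) *ᵥ u) d ≥ 0` for `u` nondecreasing along `Fin.val`. -/
private lemma one_sub_M_mulVec_nonneg
    (hq_nonneg : ∀ j, 1 ≤ j → j ≤ W → 0 ≤ q j)
    (hq_sum : ∑ j ∈ Finset.Icc 1 W, q j ≤ 1)
    (hM : ∀ d e : Fin (W + 1), M d e =
      if (e : ℕ) = (d : ℕ) then 1 - ∑ j ∈ Finset.Icc 1 (d : ℕ), q j
      else if (e : ℕ) < (d : ℕ) then q ((d : ℕ) - (e : ℕ)) else 0)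
    (u : Fin (W + 1) → ℝ) (hu : ∀ i k : Fin (W + 1), i ≤ k → u i ≤ u k)
    (d : Fin (W + 1)) : 0 ≤ ((1 - M) *ᵥ u) d := by
  have hval : ((1 - M) *ᵥ u) d = u d - ∑ e : Fin (W + 1), M d e * u e := by
    rw [Matrix.sub_mulVec, Matrix.one_mulVec]
    simp [Matrix.mulVec, dotProduct]
  rw [hval, sub_nonneg]
  calc ∑ e : Fin (W + 1), M d e * u e
      ≤ ∑ e : Fin (W + 1), M d e * u d := by
        refine Finset.sum_le_sum fun e _ => ?_
        rcases le_or_gt e d with hle | hlt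
        · exact mul_le_mul_of_nonneg_left (hu e d hle) (M_entry_nonneg hq_nonneg hq_sum hM d e)
        · have : M d e = 0 := by
            rw [hM]
            have h1 : (e : ℕ) ≠ (d : ℕ) := by
              have := (Fin.lt_iff_val_lt_val.1 hlt); omega
            have h2 : ¬ (e : ℕ) < (d : ℕ) := by
              have := (Fin.lt_iff_val_lt_val.1 hlt); omega
            simp [h1, h2]
          simp [this]
    _ = u d := by rw [← Finset.sum_mul, M_row_sum_one hM, one_mul]

/-- computation of `(1-M) *ᵥ w`. -/
private lemma one_sub_M_mulVec_w
    (hM : ∀ d e : Fin (W + 1), M d e =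
      if (e : ℕ) = (d : ℕ) then 1 - ∑ j ∈ Finset.Icc 1 (d : ℕ), q j
      else if (e : ℕ) < (d : ℕ) then q ((d : ℕ) - (e : ℕ)) else 0)
    (w : Fin (W + 1) → ℝ) (hw : ∀ i : Fin (W + 1), w i = ((i : ℕ) : ℝ))
    (d : Fin (W + 1)) :
    ((1 - M) *ᵥ w) d = ∑ j ∈ Finset.Icc 1 (d : ℕ), q j * (j : ℝ) := by
  have hval : ((1 - M) *ᵥ w) d = w d - ∑ e : Fin (W + 1), M d e * w e := by
    rw [Matrix.sub_mulVec, Matrix.one_mulVec]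
    simp [Matrix.mulVec, dotProduct]
  have hco : ∀ e : Fin (W + 1), w e = (fun k : ℕ => (k : ℝ)) (e : ℕ) := fun e => hw e
  rw [hval]
  calc w d - ∑ e : Fin (W + 1), M d e * w e
      = ((d : ℕ) : ℝ) - ((1 - ∑ j ∈ Finset.Icc 1 (d : ℕ), q j) * ((d : ℕ) : ℝ)
        + ∑ j ∈ Finset.Icc 1 (d : ℕ), q j * (((d : ℕ) - j : ℕ) : ℝ)) := by
        rw [hw d]
        congr 1
        rw [← row_sum_eq' hM d (fun k : ℕ => (k : ℝ))]
        exact Finset.sum_congr rfl fun e _ => by rw [hco e]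
    _ = ∑ j ∈ Finset.Icc 1 (d : ℕ), q j * (j : ℝ) := by
        have hcast : ∑ j ∈ Finset.Icc 1 (d : ℕ), q j * (((d : ℕ) - j : ℕ) : ℝ)
            = ∑ j ∈ Finset.Icc 1 (d : ℕ), (q j * ((d : ℕ) : ℝ) - q j * (j : ℝ)) := by
          refine Finset.sum_congr rfl fun j hj => ?_
          simp only [Finset.mem_Icc] at hj
          rw [Nat.cast_sub hj.2]; ring
        rw [hcast, Finset.sum_sub_distrib, sub_mul, one_mul, Finset.sum_mul]
        ring

end RowAux2

/-- Derivatives, monotonicity and convexity of `G(μ) = zᵀ e^{-μ} e^{μM} w`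
for the substochastic batch transition matrix `M`. -/
theorem G_deriv_monotone_convex (W : ℕ) (hW : 1 ≤ W) (q : ℕ → ℝ)
    (hq_nonneg : ∀ j, 1 ≤ j → j ≤ W → 0 ≤ q j)
    (hq_sum : ∑ j ∈ Finset.Icc 1 W, q j ≤ 1)
    (M : Matrix (Fin (W + 1)) (Fin (W + 1)) ℝ)
    (hM : ∀ d e : Fin (W + 1), M d e =
      if (e : ℕ) = (d : ℕ) then 1 - ∑ j ∈ Finset.Icc 1 (d : ℕ), q j
      else if (e : ℕ) < (d : ℕ) then q ((d : ℕ) - (e : ℕ)) else 0)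
    (z w : Fin (W + 1) → ℝ)
    (hz : ∀ i : Fin (W + 1), z i = if (i : ℕ) = W then 1 else 0)
    (hw : ∀ i : Fin (W + 1), w i = ((i : ℕ) : ℝ))
    (G : ℝ → ℝ)
    (hG : ∀ μ, G μ = z ⬝ᵥ ((Real.exp (-μ) • NormedSpace.exp (μ • M)) *ᵥ w)) :
    (∀ μ : ℝ, 0 ≤ μ →
      HasDerivAt G (-(z ⬝ᵥ ((Real.exp (-μ) • ((1 - M) * NormedSpace.exp (μ • M))) *ᵥ w))) μ ∧
      -(z ⬝ᵥ ((Real.exp (-μ) • ((1 - M) * NormedSpace.exp (μ • M))) *ᵥ w)) ≤ 0) ∧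
    (∀ μ : ℝ, 0 ≤ μ →
      HasDerivAt (deriv G)
        (z ⬝ᵥ ((Real.exp (-μ) • ((1 - M) ^ 2 * NormedSpace.exp (μ • M))) *ᵥ w)) μ ∧
      0 ≤ z ⬝ᵥ ((Real.exp (-μ) • ((1 - M) ^ 2 * NormedSpace.exp (μ • M))) *ᵥ w)) ∧
    AntitoneOn G (Set.Ici 0) ∧ ConvexOn ℝ (Set.Ici 0) G := by
  -- the shifted generator and basic identities
  have hD1 : ∀ μ : ℝ, Real.exp (-μ) • ((1 - M) * exp (μ • M))
      = -((M - 1) * exp (μ • (M - 1))) := by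
    intro μ
    rw [← mul_smul_comm, ← exp_shift M μ, ← neg_sub M 1, neg_mul]
  have hD2 : ∀ μ : ℝ, Real.exp (-μ) • ((1 - M) ^ 2 * exp (μ • M))
      = (M - 1) * ((M - 1) * exp (μ • (M - 1))) := by
    intro μ
    rw [← mul_smul_comm, ← exp_shift M μ, ← neg_sub M 1, neg_sq, sq, mul_assoc]
  -- derivative of G everywhere
  have hder : ∀ μ : ℝ,
      HasDerivAt G (-(z ⬝ᵥ ((Real.exp (-μ) • ((1 - M) * exp (μ • M))) *ᵥ w))) μ := by
    intro μ
    have h0 := hasDerivAt_dot (M - 1) 1 z w μ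
    have h1 : (fun t : ℝ => z ⬝ᵥ ((1 * exp (t • (M - 1))) *ᵥ w)) = G := by
      funext t; rw [hG, ← exp_shift, one_mul]
    rw [h1] at h0
    have h2 : -(z ⬝ᵥ ((Real.exp (-μ) • ((1 - M) * exp (μ • M))) *ᵥ w))
        = z ⬝ᵥ ((1 * ((M - 1) * exp (μ • (M - 1)))) *ᵥ w) := by
      rw [hD1 μ, Matrix.neg_mulVec, dotProduct_neg, neg_neg, one_mul]
    rw [h2]
    exact h0
  have hderivG : deriv G
      = fun μ : ℝ => -(z ⬝ᵥ ((Real.exp (-μ) • ((1 - M) * exp (μ • M))) *ᵥ w)) :=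
    funext fun μ => (hder μ).deriv
  -- second derivative everywhere
  have hder2 : ∀ μ : ℝ,
      HasDerivAt (deriv G)
        (z ⬝ᵥ ((Real.exp (-μ) • ((1 - M) ^ 2 * exp (μ • M))) *ᵥ w)) μ := by
    intro μ
    have h0 := hasDerivAt_dot (M - 1) (M - 1) z w μ
    have h1 : (fun t : ℝ => z ⬝ᵥ (((M - 1) * exp (t • (M - 1))) *ᵥ w)) = deriv G := by
      funext t
      simp only [hderivG]
      rw [hD1 t, Matrix.neg_mulVec, dotProduct_neg, neg_neg]
    rw [h1] at h0
    have h2 : z ⬝ᵥ ((Real.exp (-μ) • ((1 - M) ^ 2 * exp (μ • M))) *ᵥ w)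
        = z ⬝ᵥ (((M - 1) * ((M - 1) * exp (μ • (M - 1)))) *ᵥ w) := by
      rw [hD2 μ]
    rw [h2]
    exact h0
  -- nonnegativity ingredients
  have hznn : ∀ i, 0 ≤ z i := by
    intro i; rw [hz]; split_ifs <;> norm_num
  have hwmono : ∀ i k : Fin (W + 1), i ≤ k → w i ≤ w k := by
    intro i k hik; rw [hw, hw]; exact_mod_cast Fin.le_iff_val_le_val.1 hik
  have hv_nonneg : ∀ d, 0 ≤ ((1 - M) *ᵥ w) d := by
    intro d
    rw [one_sub_M_mulVec_w hM w hw d]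
    refine Finset.sum_nonneg fun j hj => ?_
    simp only [Finset.mem_Icc] at hj
    have hd : (d : ℕ) ≤ W := by omega
    exact mul_nonneg (hq_nonneg j hj.1 (le_trans hj.2 hd)) (by positivity)
  have hv_mono : ∀ i k : Fin (W + 1), i ≤ k → ((1 - M) *ᵥ w) i ≤ ((1 - M) *ᵥ w) k := by
    intro i k hik
    rw [one_sub_M_mulVec_w hM w hw i, one_sub_M_mulVec_w hM w hw k]
    refine Finset.sum_le_sum_of_subset_of_nonneg
      (Finset.Icc_subset_Icc_right (Fin.le_iff_val_le_val.1 hik)) ?_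
    intro j hj _
    simp only [Finset.mem_Icc] at hj
    have hk : (k : ℕ) ≤ W := by omega
    exact mul_nonneg (hq_nonneg j hj.1 (le_trans hj.2 hk)) (by positivity)
  have hvv_nonneg : ∀ d, 0 ≤ ((1 - M) *ᵥ ((1 - M) *ᵥ w)) d :=
    one_sub_M_mulVec_nonneg hq_nonneg hq_sum hM _ hv_mono
  -- commuting `1 - M` past the exponential
  have hcomm : ∀ μ : ℝ, Commute (1 - M) (exp (μ • M)) := by
    intro μ
    exact Commute.exp_right (((Commute.one_left M).sub_left (Commute.refl M)).smul_right μ)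
  -- main sign estimates
  have key : ∀ μ : ℝ, 0 ≤ μ → ∀ (u : Fin (W + 1) → ℝ), (∀ d, 0 ≤ u d) →
      0 ≤ z ⬝ᵥ (exp (μ • M) *ᵥ u) := by
    intro μ hμ u hu
    have hexp : ∀ i j, 0 ≤ exp (μ • M) i j := by
      refine exp_entry_nonneg _ fun i j => ?_
      rw [Matrix.smul_apply, smul_eq_mul]
      exact mul_nonneg hμ (M_entry_nonneg hq_nonneg hq_sum hM i j)
    simp only [Matrix.mulVec, dotProduct]
    refine Finset.sum_nonneg fun i _ => mul_nonneg (hznn i) ?_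
    exact Finset.sum_nonneg fun k _ => mul_nonneg (hexp i k) (hu k)
  have S1 : ∀ μ : ℝ, 0 ≤ μ →
      0 ≤ z ⬝ᵥ ((Real.exp (-μ) • ((1 - M) * exp (μ • M))) *ᵥ w) := by
    intro μ hμ
    rw [Matrix.smul_mulVec, dotProduct_smul, smul_eq_mul]
    refine mul_nonneg (Real.exp_nonneg _) ?_
    rw [(hcomm μ).eq, ← Matrix.mulVec_mulVec]
    exact key μ hμ _ hv_nonneg
  have S2 : ∀ μ : ℝ, 0 ≤ μ →
      0 ≤ z ⬝ᵥ ((Real.exp (-μ) • ((1 - M) ^ 2 * exp (μ • M))) *ᵥ w) := by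
    intro μ hμ
    rw [Matrix.smul_mulVec, dotProduct_smul, smul_eq_mul]
    refine mul_nonneg (Real.exp_nonneg _) ?_
    rw [((hcomm μ).pow_left 2).eq, ← Matrix.mulVec_mulVec, sq, ← Matrix.mulVec_mulVec]
    exact key μ hμ _ hvv_nonneg
  -- continuity / differentiability
  have hdiff : Differentiable ℝ G := fun μ => (hder μ).differentiableAt
  have hdiff2 : Differentiable ℝ (deriv G) := fun μ => (hder2 μ).differentiableAt
  refine ⟨fun μ hμ => ⟨hder μ, neg_nonpos.2 (S1 μ hμ)⟩,
    fun μ hμ => ⟨hder2 μ, S2 μ hμ⟩, ?_, ?_⟩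
  · refine antitoneOn_of_deriv_nonpos (convex_Ici 0) hdiff.continuous.continuousOn
      hdiff.differentiableOn ?_
    intro x hx
    rw [interior_Ici] at hx
    rw [(hder x).deriv]
    exact neg_nonpos.2 (S1 x (le_of_lt hx))
  · refine convexOn_of_deriv2_nonneg (convex_Ici 0) hdiff.continuous.continuousOn
      hdiff.differentiableOn hdiff2.differentiableOn ?_
    intro x hx
    rw [interior_Ici] at hx
    have : deriv^[2] G x = deriv (deriv G) x := by
      simp [Function.iterate_succ, Function.iterate_zero, Function.comp]
    rw [this, (hder2 x).deriv]
    exact S2 x (le_of_lt hx)
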